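/- arXiv:1205.3815 — 2 statements merged into one kernel-verified Lean document; each statement's English description precedes it below -/
import Mathlib

section
/- Let X(z) = (P₁(z), P₂(z)) and Y(z) = (Q₁(z), Q₂(z)) be polynomial vector fields on ℂ² (P₁, P₂, Q₁, Q₂ ∈ ℂ[x,y]), each with at most isolated zeros, i.e. both common zero sets {P₁ = P₂ = 0} and {Q₁ = Q₂ = 0} are finite. Suppose γ : ℂ → ℂ² is a holomorphic map with γ'(t) = X(γ(t)) for all t ∈ ℂ, whose image is non-algebraic (not contained in the zero set of any nonzero polynomial in ℂ[x,y]), and such that for every t ∈ ℂ the vectors X(γ(t)) and Y(γ(t)) are linearly dependent over ℂ. Then there exists a constant c ∈ ℂ, c ≠ 0, with Q₁ = c·P₁ and Q₂ = c·P₂ as polynomials. -/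
open MvPolynomial


noncomputable def e2 : MvPolynomial (Fin 2) ℂ ≃ₐ[ℂ] Polynomial (Polynomial ℂ) :=
  (MvPolynomial.finSuccEquiv ℂ 1).trans
    (Polynomial.mapAlgEquiv
      ((MvPolynomial.finSuccEquiv ℂ 0).trans
        (Polynomial.mapAlgEquiv (MvPolynomial.isEmptyAlgEquiv ℂ (Fin 0)))))

lemma e2_X0 : e2 (X 0) = Polynomial.X := by
  simp [e2, finSuccEquiv_X_zero, Polynomial.coe_mapAlgEquiv]

lemma e2_X1 : e2 (X 1) = Polynomial.C Polynomial.X := by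
  have h1 : (X 1 : MvPolynomial (Fin 2) ℂ) = X (Fin.succ 0) := rfl
  rw [e2, AlgEquiv.trans_apply, h1, finSuccEquiv_X_succ]
  rw [Polynomial.coe_mapAlgEquiv, Polynomial.map_C]
  simp [AlgEquiv.trans_apply, finSuccEquiv_X_zero, Polynomial.coe_mapAlgEquiv]

lemma e2_C (c : ℂ) : e2 (C c) = Polynomial.C (Polynomial.C c) := by
  have := e2.commutes c
  simpa [MvPolynomial.algebraMap_eq, Polynomial.algebraMap_apply] using this

lemma e2_eval (a b : ℂ) (p : MvPolynomial (Fin 2) ℂ) :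
    eval ![a, b] p = ((e2 p).map (Polynomial.evalRingHom b)).eval a := by
  have h : ((Polynomial.evalRingHom a).comp
      ((Polynomial.mapRingHom (Polynomial.evalRingHom b)).comp
        (e2 : MvPolynomial (Fin 2) ℂ →+* Polynomial (Polynomial ℂ))))
      = (MvPolynomial.eval ![a, b]) := by
    apply MvPolynomial.ringHom_ext
    · intro r
      simp [e2_C]
    · intro i
      fin_cases i
      · simp [e2_X0]
      · simp [e2_X1]
  have := DFunLike.congr_fun h p
  simpa using this.symm

lemma infinite_zeros {p : MvPolynomial (Fin 2) ℂ} (hp : ¬ IsUnit p) :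
    {z : ℂ × ℂ | eval ![z.1, z.2] p = 0}.Infinite := by
  rcases eq_or_ne p 0 with rfl | hp0
  · simpa using Set.infinite_univ (α := ℂ × ℂ)
  have hF0 : e2 p ≠ 0 := fun h => hp0 (by
    have := e2.injective (h.trans (map_zero (e2 : MvPolynomial (Fin 2) ℂ ≃ₐ[ℂ] _)).symm)
    simpa using this)
  have hFu : ¬ IsUnit (e2 p) := fun h => hp (by simpa using h.map e2.symm)
  rcases eq_or_ne (e2 p).natDegree 0 with h0 | hd
  · set g := (e2 p).coeff 0 with hg
    have hC : e2 p = Polynomial.C g := Polynomial.eq_C_of_natDegree_eq_zero h0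
    have hgd : g.degree ≠ 0 := by
      intro h
      exact hFu (hC ▸ (Polynomial.isUnit_iff_degree_eq_zero.mpr h).map Polynomial.C)
    obtain ⟨b, hb⟩ := IsAlgClosed.exists_root g hgd
    apply Set.infinite_of_injective_forall_mem (f := fun a : ℂ => ((a, b) : ℂ × ℂ))
    · intro x y hxy
      exact congrArg Prod.fst hxy
    · intro a
      show eval ![a, b] p = 0
      rw [e2_eval, hC]
      simp [Polynomial.IsRoot.def.mp hb]
  · have hL : (e2 p).leadingCoeff ≠ 0 := Polynomial.leadingCoeff_ne_zero.mpr hF0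
    set S := {b : ℂ | Polynomial.eval b (e2 p).leadingCoeff ≠ 0} with hSdef
    have hSi : S.Infinite := by
      have hfin := Polynomial.finite_setOf_isRoot hL
      have : S = {b : ℂ | (e2 p).leadingCoeff.IsRoot b}ᶜ := by
        ext b; simp [hSdef, Polynomial.IsRoot]
      rw [this]
      exact hfin.infinite_compl
    have hroot : ∀ b : S, ∃ a : ℂ, eval ![a, (b : ℂ)] p = 0 := by
      rintro ⟨b, hb⟩
      have hlc : ((e2 p).map (Polynomial.evalRingHom b)).leadingCoeff ≠ 0 := by
        rw [Polynomial.leadingCoeff_map_of_leadingCoeff_ne_zero _ (by simpa [hSdef] using hb)]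
        simpa [hSdef] using hb
      have hdeg : ((e2 p).map (Polynomial.evalRingHom b)).natDegree = (e2 p).natDegree :=
        Polynomial.natDegree_map_of_leadingCoeff_ne_zero _ (by simpa [hSdef] using hb)
      have hdne : ((e2 p).map (Polynomial.evalRingHom b)).degree ≠ 0 := by
        intro h
        apply hd
        rw [← hdeg]
        exact Polynomial.natDegree_eq_zero_iff_degree_le_zero.mpr h.le
      obtain ⟨a, ha⟩ := IsAlgClosed.exists_root _ hdne
      exact ⟨a, by rw [e2_eval]; exact ha⟩
    haveI := hSi.to_subtype
    choose f hf using hroot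
    apply Set.infinite_of_injective_forall_mem (f := fun b : S => ((f b, (b : ℂ)) : ℂ × ℂ))
    · intro x y hxy
      exact Subtype.ext (congrArg Prod.snd hxy)
    · intro b
      exact hf b

lemma relprime_of_finite {A B : MvPolynomial (Fin 2) ℂ}
    (h : {z : ℂ × ℂ | eval ![z.1, z.2] A = 0 ∧ eval ![z.1, z.2] B = 0}.Finite) :
    IsRelPrime A B := by
  intro d hdA hdB
  by_contra hdu
  refine infinite_zeros hdu (h.subset ?_)
  rintro z hz
  obtain ⟨kA, rfl⟩ := hdA
  obtain ⟨kB, rfl⟩ := hdB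
  have hz' : eval ![z.1, z.2] d = 0 := hz
  constructor <;> rw [map_mul, hz', zero_mul]

lemma exists_C_of_isUnit {u : MvPolynomial (Fin 2) ℂ} (h : IsUnit u) :
    ∃ c : ℂ, c ≠ 0 ∧ u = C c := by
  have h2 : IsUnit (e2 u) := h.map e2
  obtain ⟨r, hr, hre⟩ := Polynomial.isUnit_iff.mp h2
  obtain ⟨c, hc, hce⟩ := Polynomial.isUnit_iff.mp hr
  refine ⟨c, hc.ne_zero, ?_⟩
  have : e2 (C c) = e2 u := by rw [e2_C, hce, hre]
  exact (e2.injective this).symm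


/-- A non-algebraic trajectory determines a polynomial vector field with at most
isolated zeros up to multiplication by a nonzero constant. -/
theorem vector_field_determined_by_nonalgebraic_trajectory
    (P₁ P₂ Q₁ Q₂ : MvPolynomial (Fin 2) ℂ)
    (X Y : ℂ × ℂ → ℂ × ℂ)
    (hX : ∀ z : ℂ × ℂ, X z = (eval ![z.1, z.2] P₁, eval ![z.1, z.2] P₂))
    (hY : ∀ z : ℂ × ℂ, Y z = (eval ![z.1, z.2] Q₁, eval ![z.1, z.2] Q₂))
    (hisoX : {z : ℂ × ℂ | eval ![z.1, z.2] P₁ = 0 ∧ eval ![z.1, z.2] P₂ = 0}.Finite)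
    (hisoY : {z : ℂ × ℂ | eval ![z.1, z.2] Q₁ = 0 ∧ eval ![z.1, z.2] Q₂ = 0}.Finite)
    (γ : ℂ → ℂ × ℂ)
    (hγ : ∀ t : ℂ, HasDerivAt γ (X (γ t)) t)
    (hna : ¬ ∃ f : MvPolynomial (Fin 2) ℂ, f ≠ 0 ∧
        ∀ z ∈ Set.range γ, eval ![z.1, z.2] f = 0)
    (hdep : ∀ t : ℂ,
        (X (γ t)).1 * (Y (γ t)).2 - (X (γ t)).2 * (Y (γ t)).1 = 0) :
    ∃ c : ℂ, c ≠ 0 ∧ Q₁ = C c * P₁ ∧ Q₂ = C c * P₂ := by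
  have key : P₁ * Q₂ - P₂ * Q₁ = 0 := by
    by_contra h
    refine hna ⟨P₁ * Q₂ - P₂ * Q₁, h, ?_⟩
    rintro z ⟨t, rfl⟩
    have ht := hdep t
    rw [hX, hY] at ht
    simpa [map_mul, map_sub] using ht
  have key' : P₁ * Q₂ = P₂ * Q₁ := sub_eq_zero.mp key
  have hrpP : IsRelPrime P₁ P₂ := relprime_of_finite hisoX
  have hrpQ : IsRelPrime Q₁ Q₂ := relprime_of_finite hisoY
  have h1 : P₁ ∣ Q₁ := hrpP.dvd_of_dvd_mul_left ⟨Q₂, by linear_combination -key'⟩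
  have h1' : Q₁ ∣ P₁ := hrpQ.dvd_of_dvd_mul_left ⟨P₂, by linear_combination key'⟩
  have h2 : P₂ ∣ Q₂ := hrpP.symm.dvd_of_dvd_mul_left ⟨Q₁, key'⟩
  have h2' : Q₂ ∣ P₂ := hrpQ.symm.dvd_of_dvd_mul_left ⟨P₁, by linear_combination -key'⟩
  obtain ⟨u, hu⟩ := associated_of_dvd_dvd h1 h1'
  obtain ⟨v, hv⟩ := associated_of_dvd_dvd h2 h2'
  rcases eq_or_ne P₁ 0 with hP1 | hP1
  · -- then Q₁ = 0 as well; P₂ ≠ 0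
    have hQ1 : Q₁ = 0 := by
      obtain ⟨k, hk⟩ := h1
      rw [hk, hP1, zero_mul]
    obtain ⟨c, hc, hcu⟩ := exists_C_of_isUnit v.isUnit
    exact ⟨c, hc, by rw [hQ1, hP1, mul_zero], by rw [← hv, hcu, mul_comm]⟩
  · obtain ⟨c, hc, hcu⟩ := exists_C_of_isUnit u.isUnit
    have hQ1 : Q₁ = C c * P₁ := by rw [← hu, hcu, mul_comm]
    have hQ2 : Q₂ = C c * P₂ := by
      have : P₁ * Q₂ = P₁ * (C c * P₂) := by
        rw [key', hQ1]; ring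
      exact mul_left_cancel₀ hP1 this
    exact ⟨c, hc, hQ1, hQ2⟩
end

section
/- Let P, Q, f, g ∈ ℂ[x,y] be polynomials in two variables such that g ≠ 0, f is not a scalar multiple of g (there is no c ∈ ℂ with f = c·g), and the first-integral identity P·(∂ₓf·g − f·∂ₓg) + Q·(∂ᵧf·g − f·∂ᵧg) = 0 holds in ℂ[x,y] (i.e. the rational function f/g is constant along the vector field (P, Q)). Let γ : ℂ → ℂ² be a holomorphic map with γ'(t) = (P(γ(t)), Q(γ(t))) for all t ∈ ℂ, and assume g(γ(0)) ≠ 0. Then the polynomial h := g(γ(0))·f − f(γ(0))·g is nonzero and vanishes identically on the image of γ; in particular the trajectory of the vector field (P, Q) through γ(0) is algebraic, i.e. contained in the zero set of a nonzero polynomial. -/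
open MvPolynomial

private lemma eval_hasDerivAt
    (P Q : MvPolynomial (Fin 2) ℂ)
    (γ : ℂ → ℂ × ℂ)
    (hγ : ∀ t : ℂ, HasDerivAt γ
        (eval ![(γ t).1, (γ t).2] P, eval ![(γ t).1, (γ t).2] Q) t)
    (p : MvPolynomial (Fin 2) ℂ) (t : ℂ) :
    HasDerivAt (fun s => eval ![(γ s).1, (γ s).2] p)
      (eval ![(γ t).1, (γ t).2] (P * pderiv 0 p + Q * pderiv 1 p)) t := by
  have h1 : HasDerivAt (fun s => (γ s).1) (eval ![(γ t).1, (γ t).2] P) t := by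
    have := ((ContinuousLinearMap.fst ℂ ℂ ℂ).hasFDerivAt).comp t (hγ t).hasFDerivAt
    simpa [Function.comp_def] using this.hasDerivAt
  have h2 : HasDerivAt (fun s => (γ s).2) (eval ![(γ t).1, (γ t).2] Q) t := by
    have := ((ContinuousLinearMap.snd ℂ ℂ ℂ).hasFDerivAt).comp t (hγ t).hasFDerivAt
    simpa [Function.comp_def] using this.hasDerivAt
  induction p using MvPolynomial.induction_on with
  | C a => simpa using hasDerivAt_const t a
  | add p q hp hq =>
      have hfun : (fun s => eval ![(γ s).1, (γ s).2] (p + q))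
          = fun s => eval ![(γ s).1, (γ s).2] p + eval ![(γ s).1, (γ s).2] q := by
        funext s; simp
      rw [hfun]
      have := hp.add hq
      refine this.congr_deriv ?_
      simp only [map_add, eval_add, eval_mul, mul_add]
      ring
  | mul_X p i hp =>
      have hX : HasDerivAt (fun s => eval ![(γ s).1, (γ s).2] (X i))
          (eval ![(γ t).1, (γ t).2] (if i = 0 then P else Q)) t := by
        fin_cases i
        · simpa using h1
        · simpa using h2
      have hfun : (fun s => eval ![(γ s).1, (γ s).2] (p * X i))
          = fun s => eval ![(γ s).1, (γ s).2] p * eval ![(γ s).1, (γ s).2] (X i) := by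
        funext s; simp
      rw [hfun]
      have := hp.mul hX
      refine this.congr_deriv ?_
      fin_cases i <;>
        simp [pderiv_mul, pderiv_X, Pi.single_apply, eval_add, eval_mul, eval_X,
          mul_add, add_mul] <;> ring

/-- If a polynomial vector field `(P, Q)` admits a non-constant rational first
integral `f/g`, then every trajectory through a point where `g` does not vanish
is algebraic: it lies in the zero set of the nonzero polynomial
`h = g(γ(0))·f − f(γ(0))·g`. -/
theorem trajectory_algebraic_of_rational_first_integral
    (P Q f g : MvPolynomial (Fin 2) ℂ)
    (hg : g ≠ 0)
    (hnc : ¬ ∃ c : ℂ, f = C c * g)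
    (hfi : P * (pderiv 0 f * g - f * pderiv 0 g)
         + Q * (pderiv 1 f * g - f * pderiv 1 g) = 0)
    (γ : ℂ → ℂ × ℂ)
    (hγ : ∀ t : ℂ, HasDerivAt γ
        (eval ![(γ t).1, (γ t).2] P, eval ![(γ t).1, (γ t).2] Q) t)
    (hg0 : eval ![(γ 0).1, (γ 0).2] g ≠ 0) :
    C (eval ![(γ 0).1, (γ 0).2] g) * f - C (eval ![(γ 0).1, (γ 0).2] f) * g ≠ 0 ∧
    ∀ t : ℂ, eval ![(γ t).1, (γ t).2]
        (C (eval ![(γ 0).1, (γ 0).2] g) * f - C (eval ![(γ 0).1, (γ 0).2] f) * g) = 0 := by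
  set g0 : ℂ := eval ![(γ 0).1, (γ 0).2] g with hg0def
  set f0 : ℂ := eval ![(γ 0).1, (γ 0).2] f with hf0def
  constructor
  · intro h
    apply hnc
    refine ⟨g0⁻¹ * f0, ?_⟩
    have : C g0 * f = C f0 * g := by linear_combination h
    have := congrArg (fun p => C (g0⁻¹) * p) this
    simp only [← mul_assoc, ← C_mul, inv_mul_cancel₀ hg0] at this
    simpa [C_mul, mul_assoc] using this
  · -- the trajectory lies in the zero set of h
    set F : ℂ → ℂ := fun s => eval ![(γ s).1, (γ s).2] f with hF
    set G : ℂ → ℂ := fun s => eval ![(γ s).1, (γ s).2] g with hG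
    have hFd : ∀ t, HasDerivAt F (eval ![(γ t).1, (γ t).2] (P * pderiv 0 f + Q * pderiv 1 f)) t :=
      eval_hasDerivAt P Q γ hγ f
    have hGd : ∀ t, HasDerivAt G (eval ![(γ t).1, (γ t).2] (P * pderiv 0 g + Q * pderiv 1 g)) t :=
      eval_hasDerivAt P Q γ hγ g
    -- Wronskian vanishes
    have hW : ∀ t, (eval ![(γ t).1, (γ t).2] (P * pderiv 0 f + Q * pderiv 1 f)) * G t
        - F t * (eval ![(γ t).1, (γ t).2] (P * pderiv 0 g + Q * pderiv 1 g)) = 0 := by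
      intro t
      have := congrArg (eval ![(γ t).1, (γ t).2]) hfi
      simp only [eval_add, eval_mul, eval_sub, map_zero] at this
      simp only [hF, hG, eval_add, eval_mul]
      linear_combination this
    set u : ℂ → ℂ := fun s => g0 * F s - f0 * G s with hu
    have hud : ∀ t, HasDerivAt u
        (g0 * (eval ![(γ t).1, (γ t).2] (P * pderiv 0 f + Q * pderiv 1 f))
          - f0 * (eval ![(γ t).1, (γ t).2] (P * pderiv 0 g + Q * pderiv 1 g))) t := by
      intro t
      exact ((hFd t).const_mul g0).sub ((hGd t).const_mul f0)
    -- G is continuous, nonzero near 0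
    have hGc : Continuous G := by
      have : Differentiable ℂ G := fun t => (hGd t).differentiableAt
      exact this.continuous
    obtain ⟨r, hr, hball⟩ : ∃ r > 0, ∀ s ∈ Metric.ball (0:ℂ) r, G s ≠ 0 := by
      have : ∀ᶠ s in nhds (0:ℂ), G s ≠ 0 := hGc.continuousAt.eventually_ne hg0
      rcases Metric.eventually_nhds_iff_ball.1 this with ⟨r, hr, h⟩
      exact ⟨r, hr, h⟩
    -- q = u / G is constant on the ball
    have hq0 : ∀ s ∈ Metric.ball (0:ℂ) r, u s = 0 := by
      intro s hs
      set q : ℂ → ℂ := fun s => u s / G s with hqdef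
      have hqd : ∀ x ∈ Metric.ball (0:ℂ) r, HasDerivAt q 0 x := by
        intro x hx
        have hGx := hball x hx
        have hd := ((hud x).div (hGd x) hGx)
        set a : ℂ := eval ![(γ x).1, (γ x).2] (P * pderiv 0 f + Q * pderiv 1 f) with ha
        set b : ℂ := eval ![(γ x).1, (γ x).2] (P * pderiv 0 g + Q * pderiv 1 g) with hb
        have hWx := hW x
        have hnum : (g0 * a - f0 * b) * G x - u x * b = 0 := by
          simp only [hu]
          linear_combination g0 * hWx
        rw [hnum, zero_div] at hd
        exact hd
      have hconst : q s = q 0 := by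
        apply Convex.is_const_of_fderivWithin_eq_zero (convex_ball (0:ℂ) r)
          (f := q) (𝕜 := ℂ)
        · intro x hx
          exact ((hqd x hx).differentiableAt).differentiableWithinAt
        · intro x hx
          rw [fderivWithin_eq_fderiv ((Metric.isOpen_ball).uniqueDiffOn x hx)
            ((hqd x hx).differentiableAt)]
          rw [(hqd x hx).hasFDerivAt.fderiv]
          ext
          simp
        · exact hs
        · exact Metric.mem_ball_self hr
      have hu0 : u 0 = g0 * f0 - f0 * g0 := rfl
      have hq00 : q 0 = 0 := by
        show u 0 / G 0 = 0
        rw [hu0, mul_comm, sub_self, zero_div]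
      have hdiv : u s / G s = 0 := hconst.trans hq00
      rcases div_eq_zero_iff.mp hdiv with h | h
      · exact h
      · exact absurd h (hball s hs)
    -- u is entire and vanishes on a ball, hence everywhere
    have hud' : Differentiable ℂ u := fun t => (hud t).differentiableAt
    have hua : AnalyticOnNhd ℂ u Set.univ := fun z _ => hud'.analyticAt z
    have huz : ∀ t, u t = 0 := by
      have h0 : ∀ᶠ s in nhds (0:ℂ), u s = 0 :=
        Filter.eventually_of_mem (Metric.ball_mem_nhds 0 hr) hq0
      intro t
      exact hua.eqOn_zero_of_preconnected_of_eventuallyEq_zero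
        isPreconnected_univ (Set.mem_univ 0) h0 (Set.mem_univ t)
    intro t
    have := huz t
    simp only [hu, hF, hG] at this
    simp only [eval_sub, eval_mul, eval_C]
    linear_combination this
end
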